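/- Let q ≥ 2 and let A be an N × n array with entries in Z_q that is an orthogonal array of strength t ≥ 1. Then for every family of orthonormal polynomials on Z_q and every integer k with 1 ≤ k ≤ t, β_k(A) = 0. -/

import Mathlib

open Finset

/-- A family of orthonormal polynomials on `Z_q`: `p_0 ≡ 1`, `p_j` has degree exactly
`j` for `j < q`, and `∑_{x=0}^{q-1} p_i(x) p_j(x)` equals `q` if `i = j` and `0`
otherwise. -/
def IsOrthonormalFamily (q : ℕ) (p : ℕ → Polynomial ℝ) : Prop :=
  p 0 = 1 ∧ (∀ j < q, (p j).degree = j) ∧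
    ∀ i < q, ∀ j < q,
      (∑ x ∈ Finset.range q, (p i).eval (x : ℝ) * (p j).eval (x : ℝ)) =
        if i = j then (q : ℝ) else 0

/-- The `β`-wordlength pattern value
`β_k(A) = N⁻² ∑_{u : u₁+⋯+uₙ = k} (∑ᵢ ∏ⱼ p_{uⱼ}(aᵢⱼ))²`. -/
noncomputable def betaWL {Row Col : Type*} [Fintype Row] [Fintype Col] [DecidableEq Col]
    (q : ℕ) (p : ℕ → Polynomial ℝ) (k : ℕ) (A : Row → Col → ZMod q) : ℝ :=
  ((Fintype.card Row : ℝ) ^ 2)⁻¹ *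
    ∑ u ∈ Finset.univ.filter (fun u : Col → Fin q => (∑ j, (u j : ℕ)) = k),
      (∑ i : Row, ∏ j : Col, (p (u j : ℕ)).eval ((A i j).val : ℝ)) ^ 2

/-- An `N × n` array with entries in `Z_q` is an orthogonal array of strength `t` if in
every `N × t` subarray formed by `t` of its columns, each of the `q^t` level
combinations occurs exactly `N / q^t` times among the rows. -/
def IsOA (q N n t : ℕ) (A : Fin N → Fin n → ZMod q) : Prop :=
  ∀ s : Fin t → Fin n, Function.Injective s → ∀ v : Fin t → ZMod q,
    (Finset.univ.filter fun i : Fin N => ∀ j, A i (s j) = v j).card * q ^ t = N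

/-- Lemma 1: For an orthogonal array of strength `t ≥ 1`,
`β_k = 0` for `k = 1, ..., t`, for every family of orthonormal polynomials. -/
lemma sum_zmod_val (q : ℕ) [NeZero q] (f : ℕ → ℝ) :
    ∑ x : ZMod q, f x.val = ∑ m ∈ Finset.range q, f m := by
  refine Finset.sum_nbij' (fun x => x.val) (fun m => (m : ZMod q)) ?_ ?_ ?_ ?_ ?_
  · intro a _; exact Finset.mem_range.mpr (ZMod.val_lt a)
  · intro a _; exact Finset.mem_univ _
  · intro a _; simp [ZMod.natCast_val, ZMod.cast_id]
  · intro a ha; exact ZMod.val_cast_of_lt (Finset.mem_range.mp ha)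
  · intro a _; rfl

lemma inner_sum_zero (q N n t : ℕ) [NeZero q] (htn : t ≤ n)
    (A : Fin N → Fin n → ZMod q) (hA : IsOA q N n t A)
    (p : ℕ → Polynomial ℝ) (hp : IsOrthonormalFamily q p)
    (k : ℕ) (hk1 : 1 ≤ k) (hkt : k ≤ t)
    (u : Fin n → Fin q) (hu : (∑ j, (u j : ℕ)) = k) :
    (∑ i : Fin N, ∏ j : Fin n, (p (u j : ℕ)).eval ((A i j).val : ℝ)) = 0 := by
  obtain ⟨hp0, hpdeg, hporth⟩ := hp
  classical
  set S : Finset (Fin n) := Finset.univ.filter (fun j => u j ≠ 0) with hSdef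
  have hScard : S.card ≤ t := by
    calc S.card = ∑ j ∈ S, 1 := by rw [Finset.card_eq_sum_ones]
    _ ≤ ∑ j ∈ S, (u j : ℕ) := by
        refine Finset.sum_le_sum ?_
        intro j hj
        have h : u j ≠ 0 := (Finset.mem_filter.mp hj).2
        have : (u j : ℕ) ≠ 0 := fun hz => h (Fin.ext (by simpa using hz))
        omega
    _ ≤ ∑ j, (u j : ℕ) := Finset.sum_le_sum_of_subset (Finset.subset_univ S)
    _ = k := hu
    _ ≤ t := hkt
  obtain ⟨T, hST, hT⟩ := Finset.exists_superset_card_eq hScard (by simpa using htn)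
  let e : T ≃ Fin t := T.equivFin.trans (finCongr hT)
  let s : Fin t → Fin n := fun jt => (e.symm jt : Fin n)
  have hs_inj : Function.Injective s := by
    intro a b hab
    exact e.symm.injective (Subtype.ext hab)
  have hs_mem : ∀ jt, s jt ∈ T := fun jt => (e.symm jt).2
  have hs_surj : ∀ j ∈ T, ∃ jt, s jt = j := by
    intro j hj
    exact ⟨e ⟨j, hj⟩, by simp [s]⟩
  have hu_outside : ∀ j ∉ T, u j = 0 := by
    intro j hj
    by_contra h
    exact hj (hST (Finset.mem_filter.mpr ⟨Finset.mem_univ _, h⟩))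
  have hprod : ∀ (w : Fin n → ZMod q),
      (∏ j : Fin n, (p (u j : ℕ)).eval ((w j).val : ℝ))
        = ∏ jt : Fin t, (p (u (s jt) : ℕ)).eval ((w (s jt)).val : ℝ) := by
    intro w
    rw [← Finset.prod_subset (Finset.subset_univ T)]
    · rw [← Finset.prod_image (f := fun j => (p (u j : ℕ)).eval ((w j).val : ℝ))
        (g := s) (s := Finset.univ) (by intro a _ b _ h; exact hs_inj h)]
      congr 1
      refine Finset.ext fun j => ?_
      simp only [Finset.mem_image, Finset.mem_univ, true_and]
      constructor
      · exact hs_surj j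
      · rintro ⟨jt, rfl⟩; exact hs_mem jt
    · intro j _ hj
      rw [hu_outside j hj]
      simp [hp0]
  have key : (∑ i : Fin N, ∏ j : Fin n, (p (u j : ℕ)).eval ((A i j).val : ℝ)) * (q ^ t : ℝ)
      = (N : ℝ) * ∑ v : Fin t → ZMod q, ∏ jt : Fin t, (p (u (s jt) : ℕ)).eval ((v jt).val : ℝ) := by
    rw [← Finset.sum_fiberwise Finset.univ (fun i => fun jt => A i (s jt))
      (fun i => ∏ j : Fin n, (p (u j : ℕ)).eval ((A i j).val : ℝ))]
    rw [Finset.sum_mul, Finset.mul_sum]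
    refine Finset.sum_congr rfl ?_
    intro v _
    have hfib : ∀ i ∈ Finset.univ.filter (fun i : Fin N => (fun jt => A i (s jt)) = v),
        (∏ j : Fin n, (p (u j : ℕ)).eval ((A i j).val : ℝ))
          = ∏ jt : Fin t, (p (u (s jt) : ℕ)).eval ((v jt).val : ℝ) := by
      intro i hi
      have hv : ∀ jt, A i (s jt) = v jt := fun jt =>
        congrFun (Finset.mem_filter.mp hi).2 jt
      rw [hprod (A i)]
      exact Finset.prod_congr rfl fun jt _ => by rw [hv jt]
    rw [Finset.sum_congr rfl hfib, Finset.sum_const, nsmul_eq_mul]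
    have hcount0 := hA s hs_inj v
    have hfilt : (Finset.univ.filter fun i : Fin N => ∀ jt, A i (s jt) = v jt)
        = Finset.univ.filter (fun i : Fin N => (fun jt => A i (s jt)) = v) := by
      apply Finset.filter_congr
      intro i _
      simp [funext_iff]
    rw [hfilt] at hcount0
    have hcount : ((Finset.univ.filter (fun i : Fin N => (fun jt => A i (s jt)) = v)).card : ℝ)
        * (q : ℝ) ^ t = (N : ℝ) := by exact_mod_cast congrArg (Nat.cast : ℕ → ℝ) hcount0
    rw [mul_right_comm, hcount]
  have hvsum : (∑ v : Fin t → ZMod q,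
      ∏ jt : Fin t, (p (u (s jt) : ℕ)).eval ((v jt).val : ℝ)) = 0 := by
    rw [← Fintype.piFinset_univ,
      ← Finset.prod_univ_sum (fun _ : Fin t => (Finset.univ : Finset (ZMod q)))
        (fun jt (x : ZMod q) => Polynomial.eval ((x.val : ℕ) : ℝ) (p (u (s jt) : ℕ)))]
    have hSne : S.Nonempty := by
      by_contra h
      rw [Finset.not_nonempty_iff_eq_empty] at h
      have hall : ∀ j, u j = 0 := by
        intro j
        by_contra hj
        have : j ∈ S := Finset.mem_filter.mpr ⟨Finset.mem_univ _, hj⟩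
        simp [h] at this
      have : (∑ j, (u j : ℕ)) = 0 := Finset.sum_eq_zero (fun j _ => by rw [hall j]; rfl)
      omega
    obtain ⟨j0, hj0⟩ := hSne
    obtain ⟨jt0, hjt0⟩ := hs_surj j0 (hST hj0)
    refine Finset.prod_eq_zero (Finset.mem_univ jt0) ?_
    have hne : (u (s jt0) : ℕ) ≠ 0 := by
      rw [hjt0]
      have := (Finset.mem_filter.mp hj0).2
      exact fun hz => this (Fin.ext (by simpa using hz))
    have hlt : (u (s jt0) : ℕ) < q := (u (s jt0)).2
    have horth := hporth (u (s jt0) : ℕ) hlt 0 (Nat.pos_of_ne_zero (NeZero.ne q))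
    rw [if_neg hne] at horth
    rw [sum_zmod_val q (fun m => (p (u (s jt0) : ℕ)).eval (m : ℝ))]
    rw [← horth]
    refine Finset.sum_congr rfl ?_
    intro x _
    simp [hp0]
  have hqne : ((q : ℝ)) ^ t ≠ 0 := by
    have : (q : ℝ) ≠ 0 := Nat.cast_ne_zero.mpr (NeZero.ne q)
    positivity
  have hk := key
  rw [hvsum, mul_zero] at hk
  exact (mul_eq_zero.mp hk).resolve_right hqne

theorem statement4 (q N n t : ℕ) [NeZero q] (hq : 2 ≤ q) (ht : 1 ≤ t) (htn : t ≤ n)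
    (A : Fin N → Fin n → ZMod q) (hA : IsOA q N n t A)
    (p : ℕ → Polynomial ℝ) (hp : IsOrthonormalFamily q p)
    (k : ℕ) (hk1 : 1 ≤ k) (hkt : k ≤ t) :
    betaWL q p k A = 0 := by
  unfold betaWL
  rw [Finset.sum_eq_zero, mul_zero]
  intro u hu
  have := inner_sum_zero q N n t htn A hA p hp k hk1 hkt u (Finset.mem_filter.mp hu).2
  rw [this]
  ring
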